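/- Let E be a real inner product space and let φ : E → ℝ be differentiable, L-smooth (gradient L-Lipschitz) and μ-strongly convex with μ > 0, attaining its minimum value φ*. Fix γ_g, γ_r with 0 < γ_g ≤ 1/L, 0 < γ_r ≤ 1/L, an integer r ≥ 1, and a ∈ (0,1). Given θ_t ∈ E and an error vector e_t ∈ E, define the half-step θ⁺ = θ_t − γ_g(∇φ(θ_t) + e_t), and let θ_{t+1} be the result of r exact gradient steps of size γ_r applied to θ⁺ (i.e. iterating θ ↦ θ − γ_r ∇φ(θ) exactly r times). Then φ(θ_{t+1}) − φ* ≤ (1 − μγ_g)(1 − μγ_r)^r (φ(θ_t) − φ*) + (1 − μγ_r)^r (γ_g/(2a) + Lγ_g²/2) ‖e_t‖². -/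

import Mathlib

open scoped RealInnerProductSpace

lemma descent_lemma {E : Type*} [NormedAddCommGroup E] [InnerProductSpace ℝ E]
    (φ : E → ℝ) (φ' : E → E) (L : ℝ) (hL : 0 ≤ L)
    (hdiff : ∀ θ : E, HasFDerivAt φ (innerSL ℝ (φ' θ)) θ)
    (hsmooth : ∀ θ θ' : E, ‖φ' θ' - φ' θ‖ ≤ L * ‖θ' - θ‖)
    (x y : E) : φ y ≤ φ x + ⟪φ' x, y - x⟫ + L / 2 * ‖y - x‖ ^ 2 := by
  set v := y - x with hv
  have hcont : Continuous φ' := by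
    have : LipschitzWith (Real.toNNReal L) φ' := by
      apply LipschitzWith.of_dist_le_mul
      intro a b
      simpa [dist_eq_norm, Real.coe_toNNReal _ hL] using hsmooth b a
    exact this.continuous
  have hderiv : ∀ t : ℝ, HasDerivAt (fun t : ℝ => φ (x + t • v)) ⟪φ' (x + t • v), v⟫ t := by
    intro t
    have h1 : HasDerivAt (fun t : ℝ => x + t • v) v t := by
      simpa using ((hasDerivAt_id t).smul_const v).const_add x
    have := (hdiff (x + t • v)).comp_hasDerivAt t h1
    exact this
  have hcont2 : Continuous fun t : ℝ => ⟪φ' (x + t • v), v⟫ := by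
    exact (Continuous.inner (hcont.comp (by continuity)) continuous_const)
  have hFTC : φ y - φ x = ∫ t in (0:ℝ)..1, ⟪φ' (x + t • v), v⟫ := by
    have := intervalIntegral.integral_eq_sub_of_hasDerivAt
      (f := fun t : ℝ => φ (x + t • v)) (f' := fun t : ℝ => ⟪φ' (x + t • v), v⟫)
      (a := 0) (b := 1) (fun t _ => hderiv t)
      (hcont2.intervalIntegrable 0 1)
    simp only [one_smul, zero_smul, add_zero] at this
    rw [this]
    have hxy : x + v = y := by simp [hv]
    rw [hxy]
  have hbound : ∫ t in (0:ℝ)..1, ⟪φ' (x + t • v), v⟫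
      ≤ ∫ t in (0:ℝ)..1, (⟪φ' x, v⟫ + L * t * ‖v‖ ^ 2) := by
    apply intervalIntegral.integral_mono_on (by norm_num)
      (hcont2.intervalIntegrable 0 1)
      ((by continuity : Continuous fun t : ℝ => ⟪φ' x, v⟫ + L * t * ‖v‖ ^ 2).intervalIntegrable 0 1)
    intro t ht
    have h1 : ⟪φ' (x + t • v) - φ' x, v⟫ ≤ L * t * ‖v‖ ^ 2 := by
      calc ⟪φ' (x + t • v) - φ' x, v⟫ ≤ ‖φ' (x + t • v) - φ' x‖ * ‖v‖ :=
            real_inner_le_norm _ _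
        _ ≤ (L * ‖(x + t • v) - x‖) * ‖v‖ := by
            gcongr; exact hsmooth x (x + t • v)
        _ = L * t * ‖v‖ ^ 2 := by
            rw [add_sub_cancel_left, norm_smul, Real.norm_eq_abs,
              abs_of_nonneg ht.1]
            ring
    have := inner_sub_left (𝕜 := ℝ) (φ' (x + t • v)) (φ' x) v
    linarith [h1, this.symm.le, this.le]
  have hval : ∫ t in (0:ℝ)..1, (⟪φ' x, v⟫ + L * t * ‖v‖ ^ 2)
      = ⟪φ' x, v⟫ + L / 2 * ‖v‖ ^ 2 := by
    rw [intervalIntegral.integral_add (intervalIntegrable_const)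
      (by apply Continuous.intervalIntegrable; continuity)]
    have h1 : ∫ t in (0:ℝ)..1, L * t * ‖v‖ ^ 2 = L / 2 * ‖v‖ ^ 2 := by
      have : (fun t : ℝ => L * t * ‖v‖ ^ 2) = fun t : ℝ => (L * ‖v‖ ^ 2) * t := by
        funext t; ring
      rw [this, intervalIntegral.integral_const_mul, integral_id]
      ring
    rw [h1]; simp
  linarith [hFTC, hbound, hval]

/-- **Round-wise contraction of REVERB-FL (deterministic case).** Let `E` be a real inner
product space and `φ : E → ℝ` be differentiable with gradient `φ'`, `L`-smooth and
`μ`-strongly convex (`μ > 0`), attaining its minimum value `φ*`. Fix `0 < γ_g ≤ 1/L`,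
`0 < γ_r ≤ 1/L`, an integer `r ≥ 1`, and `a ∈ (0,1)`. Given `θ_t` and an error vector `e_t`,
set `θ⁺ = θ_t - γ_g (∇φ(θ_t) + e_t)` and let `θ_{t+1}` be the result of `r` exact gradient
steps of size `γ_r` from `θ⁺`. Then
`φ(θ_{t+1}) - φ* ≤ (1 - μγ_g)(1 - μγ_r)^r (φ(θ_t) - φ*)
  + (1 - μγ_r)^r (γ_g/(2a) + Lγ_g²/2) ‖e_t‖²`. -/
theorem reverb_fl_round_contraction_deterministic {E : Type*} [NormedAddCommGroup E]
    [InnerProductSpace ℝ E]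
    (φ : E → ℝ) (φ' : E → E) (L μ : ℝ) (hμ : 0 < μ)
    (hdiff : ∀ θ : E, HasFDerivAt φ (innerSL ℝ (φ' θ)) θ)
    (hsmooth : ∀ θ θ' : E, ‖φ' θ' - φ' θ‖ ≤ L * ‖θ' - θ‖)
    (hsc : ∀ θ θ' : E, φ θ' ≥ φ θ + ⟪φ' θ, θ' - θ⟫ + μ / 2 * ‖θ' - θ‖ ^ 2)
    (φstar : ℝ) (θstar : E) (hlb : ∀ θ : E, φstar ≤ φ θ) (hatt : φ θstar = φstar)
    (γg γr a : ℝ) (hγg0 : 0 < γg) (hγgL : γg ≤ 1 / L)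
    (hγr0 : 0 < γr) (hγrL : γr ≤ 1 / L)
    (r : ℕ) (hr : 1 ≤ r) (ha0 : 0 < a) (ha1 : a < 1)
    (θt et : E) :
    φ ((fun θ : E => θ - γr • φ' θ)^[r] (θt - γg • (φ' θt + et))) - φstar
      ≤ (1 - μ * γg) * (1 - μ * γr) ^ r * (φ θt - φstar)
        + (1 - μ * γr) ^ r * (γg / (2 * a) + L * γg ^ 2 / 2) * ‖et‖ ^ 2 := by
  by_cases hE : ∀ z : E, z = 0
  · -- degenerate case: E is trivial
    have h1 : ((fun θ : E => θ - γr • φ' θ)^[r] (θt - γg • (φ' θt + et))) = θstar :=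
      (hE _).trans (hE θstar).symm
    have h2 : θt = θstar := (hE θt).trans (hE θstar).symm
    have h3 : et = (0 : E) := hE et
    rw [h1, h2, h3, hatt]
    simp
  · push_neg at hE
    obtain ⟨v, hv⟩ := hE
    -- μ ≤ L, hence 0 < L
    have hμL : μ ≤ L := by
      have h1 := hsc (0 : E) v
      have h2 := hsc v (0 : E)
      have hvn : (0 : ℝ) < ‖v‖ ^ 2 := pow_pos (norm_pos_iff.mpr hv) 2
      rw [sub_zero] at h1
      rw [zero_sub, norm_neg, inner_neg_right] at h2
      have h3 : ⟪φ' v - φ' 0, v⟫ ≤ L * ‖v‖ ^ 2 := by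
        calc ⟪φ' v - φ' 0, v⟫ ≤ ‖φ' v - φ' 0‖ * ‖v‖ := real_inner_le_norm _ _
          _ ≤ (L * ‖v - 0‖) * ‖v‖ := by gcongr; exact hsmooth 0 v
          _ = L * ‖v‖ ^ 2 := by rw [sub_zero]; ring
      have h4 := inner_sub_left (𝕜 := ℝ) (φ' v) (φ' 0) v
      have h5 : μ * ‖v‖ ^ 2 ≤ L * ‖v‖ ^ 2 := by linarith [h4.le, h4.ge]
      exact le_of_mul_le_mul_right h5 hvn
    have hL0 : (0 : ℝ) < L := lt_of_lt_of_le hμ hμL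
    have hLγg : L * γg ≤ 1 := by
      rw [le_div_iff₀ hL0] at hγgL; linarith
    have hLγr : L * γr ≤ 1 := by
      rw [le_div_iff₀ hL0] at hγrL; linarith
    have hμγg : μ * γg ≤ 1 := le_trans (mul_le_mul_of_nonneg_right hμL hγg0.le) hLγg
    have hμγr : μ * γr ≤ 1 := le_trans (mul_le_mul_of_nonneg_right hμL hγr0.le) hLγr
    -- PL inequality
    have hpl : ∀ θ : E, 2 * μ * (φ θ - φstar) ≤ ‖φ' θ‖ ^ 2 := by
      intro θ
      have h := hsc θ θstar
      rw [hatt] at h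
      have hIb : -⟪φ' θ, θstar - θ⟫ ≤ ‖φ' θ‖ * ‖θstar - θ‖ := by
        have h3 := abs_le.mp (abs_real_inner_le_norm (φ' θ) (θstar - θ))
        linarith [h3.1]
      have h7 : φ θ - φstar ≤ ‖φ' θ‖ * ‖θstar - θ‖ - μ / 2 * ‖θstar - θ‖ ^ 2 := by
        linarith [h, hIb]
      have h8 := mul_le_mul_of_nonneg_left h7 (by positivity : (0:ℝ) ≤ 2 * μ)
      nlinarith [h8, sq_nonneg (‖φ' θ‖ - μ * ‖θstar - θ‖)]
    -- inexact gradient step lemma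
    have hstep : ∀ (γ : ℝ), 0 < γ → L * γ ≤ 1 → ∀ (θ e : E),
        φ (θ - γ • (φ' θ + e)) - φstar
          ≤ (1 - μ * γ) * (φ θ - φstar) + (γ / (2 * a) + L * γ ^ 2 / 2) * ‖e‖ ^ 2 := by
      intro γ hγ0 hLγ θ e
      have hd := descent_lemma φ φ' L hL0.le hdiff hsmooth θ (θ - γ • (φ' θ + e))
      have h1 : θ - γ • (φ' θ + e) - θ = -(γ • (φ' θ + e)) := by abel
      rw [h1, inner_neg_right, real_inner_smul_right, inner_add_right,
        real_inner_self_eq_norm_sq, norm_neg, norm_smul, Real.norm_eq_abs,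
        abs_of_pos hγ0, mul_pow] at hd
      have hne : ‖φ' θ + e‖ ^ 2 = ‖φ' θ‖ ^ 2 + 2 * ⟪φ' θ, e⟫ + ‖e‖ ^ 2 :=
        norm_add_sq_real _ _
      rw [hne] at hd
      obtain ⟨b, hb0, hb⟩ : ∃ b : ℝ, 0 < b ∧ 1 / (2 * a) = b := ⟨_, by positivity, rfl⟩
      have hGnn : (0:ℝ) ≤ ‖φ' θ‖ ^ 2 := by positivity
      have hEnn : (0:ℝ) ≤ ‖e‖ ^ 2 := by positivity
      have hyoung : -⟪φ' θ, e⟫ ≤ a / 2 * ‖φ' θ‖ ^ 2 + b * ‖e‖ ^ 2 := by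
        have h2 : -⟪φ' θ, e⟫ ≤ ‖φ' θ‖ * ‖e‖ := by
          have h3 := abs_le.mp (abs_real_inner_le_norm (φ' θ) e)
          linarith [h3.1]
        have hq : a / 2 * ‖φ' θ‖ ^ 2 + b * ‖e‖ ^ 2 - ‖φ' θ‖ * ‖e‖
            = (a * ‖φ' θ‖ - ‖e‖) ^ 2 * b := by
          rw [← hb]; field_simp; ring
        have hq2 : (0:ℝ) ≤ (a * ‖φ' θ‖ - ‖e‖) ^ 2 * b := by positivity
        linarith [h2, hq, hq2]
      have hpl' := hpl θ
      have hc1 : 0 ≤ 1 - L * γ := by linarith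
      have hy2 : γ * (1 - L * γ) * (-⟪φ' θ, e⟫)
          ≤ γ * (1 - L * γ) * (a / 2 * ‖φ' θ‖ ^ 2 + b * ‖e‖ ^ 2) :=
        mul_le_mul_of_nonneg_left hyoung (by positivity)
      have hN1 : (0:ℝ) ≤ γ * (1 - L * γ) * (1 - a) / 2 * ‖φ' θ‖ ^ 2 := by
        have : 0 ≤ 1 - a := by linarith
        positivity
      have hN2 : (0:ℝ) ≤ L * γ * γ * b * ‖e‖ ^ 2 := by positivity
      have hkey : φ (θ - γ • (φ' θ + e))
          ≤ φ θ - γ / 2 * ‖φ' θ‖ ^ 2 + (γ * b + L * γ ^ 2 / 2) * ‖e‖ ^ 2 := by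
        linarith [hd, hy2, hN1, hN2]
      have hN3 : (0:ℝ) ≤ γ * (‖φ' θ‖ ^ 2 - 2 * μ * (φ θ - φstar)) :=
        mul_nonneg hγ0.le (by linarith [hlb θ])
      have hgb : γ / (2 * a) = γ * b := by rw [← hb]; ring
      rw [hgb]
      linarith [hkey, hN3]
    -- exact step as special case e = 0
    have hexact : ∀ θ : E, φ (θ - γr • φ' θ) - φstar ≤ (1 - μ * γr) * (φ θ - φstar) := by
      intro θ
      have := hstep γr hγr0 hLγr θ 0
      simpa using this
    -- iterate
    have h1r : 0 ≤ 1 - μ * γr := by linarith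
    have hiter : ∀ (n : ℕ) (z : E),
        φ ((fun θ : E => θ - γr • φ' θ)^[n] z) - φstar ≤ (1 - μ * γr) ^ n * (φ z - φstar) := by
      intro n
      induction n with
      | zero => intro z; simp
      | succ n ih =>
        intro z
        rw [Function.iterate_succ_apply']
        calc φ ((fun θ : E => θ - γr • φ' θ) ((fun θ : E => θ - γr • φ' θ)^[n] z)) - φstar
            ≤ (1 - μ * γr) * (φ ((fun θ : E => θ - γr • φ' θ)^[n] z) - φstar) := hexact _
          _ ≤ (1 - μ * γr) * ((1 - μ * γr) ^ n * (φ z - φstar)) :=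
              mul_le_mul_of_nonneg_left (ih z) h1r
          _ = (1 - μ * γr) ^ (n + 1) * (φ z - φstar) := by ring
    have hhalf := hstep γg hγg0 hLγg θt et
    have hfin := hiter r (θt - γg • (φ' θt + et))
    have hpow : 0 ≤ (1 - μ * γr) ^ r := pow_nonneg h1r r
    calc φ ((fun θ : E => θ - γr • φ' θ)^[r] (θt - γg • (φ' θt + et))) - φstar
        ≤ (1 - μ * γr) ^ r * (φ (θt - γg • (φ' θt + et)) - φstar) := hfin
      _ ≤ (1 - μ * γr) ^ r *
            ((1 - μ * γg) * (φ θt - φstar) + (γg / (2 * a) + L * γg ^ 2 / 2) * ‖et‖ ^ 2) :=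
          mul_le_mul_of_nonneg_left hhalf hpow
      _ = (1 - μ * γg) * (1 - μ * γr) ^ r * (φ θt - φstar)
          + (1 - μ * γr) ^ r * (γg / (2 * a) + L * γg ^ 2 / 2) * ‖et‖ ^ 2 := by ring
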